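/- arXiv:1507.07309 — 2 statements merged into one kernel-verified Lean document; each statement's English description precedes it below -/
import Mathlib

section
/- Let p be an odd prime, F⁺ a totally real number field in which p is unramified (every prime of the ring of integers 𝓞_{F⁺} lying above p has ramification index 1 over pℤ), and F a totally imaginary quadratic extension of F⁺ such that every prime of F⁺ lying above p splits completely in F. Then the index of the image of the unit group 𝓞_{F⁺}^× inside the unit group 𝓞_F^× is finite and is not divisible by p. -/
open NumberField

set_option synthInstance.maxHeartbeats 1000000
set_option maxHeartbeats 1600000

open Polynomial

private theorem aux_normal {Fplus F : Type*} [Field Fplus] [Field F] [Algebra Fplus F]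
    (hquad : Module.finrank Fplus F = 2) : Normal Fplus F := by
  have hfd : FiniteDimensional Fplus F := FiniteDimensional.of_finrank_pos (by omega)
  rw [normal_iff]
  intro x
  refine ⟨Algebra.IsIntegral.isIntegral x, ?_⟩
  have hdeg : (minpoly Fplus x).natDegree ≤ 2 := hquad ▸ minpoly.natDegree_le x
  set q : F[X] := (minpoly Fplus x).map (algebraMap Fplus F) with hq
  have hroot : q.IsRoot x := by
    simp [hq, IsRoot, eval_map, ← aeval_def, minpoly.aeval]
  have hfac : (X - C x) * (q /ₘ (X - C x)) = q := mul_divByMonic_eq_iff_isRoot.mpr hroot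
  have hq0 : q ≠ 0 := by
    have := minpoly.ne_zero (Algebra.IsIntegral.isIntegral (R := Fplus) x)
    simpa [hq] using this
  have hdeg' : (q /ₘ (X - C x)).natDegree ≤ 1 := by
    rw [natDegree_divByMonic q (monic_X_sub_C x)]
    have : q.natDegree ≤ 2 := by rw [hq, natDegree_map]; exact hdeg
    simp [natDegree_X_sub_C]
    omega
  rw [← hfac]
  exact (Splits.X_sub_C _).mul (Splits.of_natDegree_le_one hdeg')

private theorem aux_two_elems {α : Type*} [Fintype α] (h : Fintype.card α = 2)
    {a b c : α} (hab : a ≠ b) (hac : a ≠ c) : b = c := by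
  by_contra hbc
  classical
  have : 3 ≤ Fintype.card α := by
    have hsub : ({a, b, c} : Finset α).card ≤ Fintype.card α := Finset.card_le_univ _
    rwa [Finset.card_insert_of_notMem (by simp [hab, hac]),
      Finset.card_insert_of_notMem (by simp [hbc]), Finset.card_singleton] at hsub
  omega

private theorem aux_fixed {Fplus F : Type*} [Field Fplus] [Field F] [Algebra Fplus F]
    [FiniteDimensional Fplus F] [IsGalois Fplus F]
    (hcard : Fintype.card (F ≃ₐ[Fplus] F) = 2) (c : F ≃ₐ[Fplus] F) (hc : c ≠ 1)
    {x : F} (hx : c x = x) : x ∈ Set.range (algebraMap Fplus F) := by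
  have hall : ∀ g : F ≃ₐ[Fplus] F, g x = x := by
    intro g
    rcases eq_or_ne g 1 with rfl | hg
    · rfl
    · have : g = c := aux_two_elems hcard (Ne.symm hg) (Ne.symm hc)
      rw [this, hx]
  rw [← IntermediateField.mem_bot (F := Fplus)]
  rw [← IsGalois.fixedField_fixingSubgroup (⊥ : IntermediateField Fplus F)]
  exact fun g => hall g.1

private theorem aux_place {Fplus F : Type*} [Field Fplus] [NumberField Fplus] [Field F]
    [NumberField F] [Algebra Fplus F]
    (htr : ∀ v : InfinitePlace Fplus, v.IsReal)
    (hquad : Module.finrank Fplus F = 2)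
    (hti : ∀ v : InfinitePlace F, v.IsComplex)
    (c : F ≃ₐ[Fplus] F) (hc : c ≠ 1) (w : InfinitePlace F) (x : F) :
    w (c x) = w x := by
  have hfd : FiniteDimensional Fplus F := FiniteDimensional.of_finrank_pos (by omega)
  set φ := w.embedding with hφ
  letI : Algebra Fplus ℂ := (φ.comp (algebraMap Fplus F)).toAlgebra
  let φ' : F →ₐ[Fplus] ℂ := { toRingHom := φ, commutes' := fun a => rfl }
  let ψ₁ : F →ₐ[Fplus] ℂ := φ'.comp c.toAlgHom
  have hreal : ComplexEmbedding.IsReal (φ.comp (algebraMap Fplus F)) :=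
    InfinitePlace.isReal_mk_iff.mp (htr (InfinitePlace.mk (φ.comp (algebraMap Fplus F))))
  have hcomm : ∀ a : Fplus, star (φ (algebraMap Fplus F a)) = φ (algebraMap Fplus F a) := by
    intro a
    exact RingHom.congr_fun (ComplexEmbedding.isReal_iff.mp hreal) a
  let ψ₂ : F →ₐ[Fplus] ℂ :=
    { toRingHom := ((starRingEnd ℂ) : ℂ →+* ℂ).comp φ,
      commutes' := fun a => hcomm a }
  have hcard : Fintype.card (F →ₐ[Fplus] ℂ) = 2 := by
    rw [AlgHom.card]; exact hquad
  have h1 : φ' ≠ ψ₁ := by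
    intro h
    apply hc
    ext y
    have := AlgHom.congr_fun h y
    simpa [φ', ψ₁] using (RingHom.injective φ this.symm)
  have h2 : φ' ≠ ψ₂ := by
    intro h
    have : ComplexEmbedding.IsReal φ := by
      rw [ComplexEmbedding.isReal_iff]
      ext y
      exact (AlgHom.congr_fun h y).symm
    exact (InfinitePlace.not_isReal_iff_isComplex.mpr (hti w))
      (InfinitePlace.isReal_iff.mpr this)
  have h12 : ψ₁ = ψ₂ := aux_two_elems hcard h1 h2
  have := AlgHom.congr_fun h12 x
  have hval : φ (c x) = star (φ x) := by simpa [ψ₁, ψ₂, φ'] using this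
  rw [← InfinitePlace.norm_embedding_eq w (c x), ← InfinitePlace.norm_embedding_eq w x,
    ← hφ, hval]
  simp

private theorem aux_not_le_sq {R S : Type*} [CommRing R] [CommRing S] [Algebra R S]
    {p : Ideal R} {P : Ideal S} (he : Ideal.ramificationIdx' p P = 1) :
    ¬ Ideal.map (algebraMap R S) p ≤ P ^ 2 := by
  set f := algebraMap R S with hf
  intro h2
  classical
  have hbdd : ∃ n, ¬ Ideal.map f p ≤ P ^ n := by
    by_contra hall
    push_neg at hall
    have h0 := Ideal.ramificationIdx'_eq_zero (p := p) (P := P)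
      (fun n => ⟨n + 1, hall _, n.lt_succ_self⟩)
    rw [he] at h0; exact one_ne_zero h0
  set n₀ := Nat.find hbdd with hn₀
  have hspec : ¬ Ideal.map f p ≤ P ^ n₀ := Nat.find_spec hbdd
  have hmin : ∀ m, m < n₀ → Ideal.map f p ≤ P ^ m := fun m hm =>
    not_not.mp (Nat.find_min hbdd hm)
  have h3 : 3 ≤ n₀ := by
    by_contra hlt
    push_neg at hlt
    interval_cases n₀
    · exact hspec (by simp [Ideal.one_eq_top])
    · exact hspec (h2.trans (Ideal.pow_le_pow_right (by norm_num)))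
    · exact hspec h2
  have heq : Ideal.ramificationIdx' p P = n₀ - 1 := by
    refine Ideal.ramificationIdx'_spec (hmin _ (by omega)) ?_
    have : n₀ - 1 + 1 = n₀ := by omega
    rw [this]; exact hspec
  rw [he] at heq; omega

private theorem aux_res {F : Type*} [Field F] [NumberField F] {p : ℕ} (hp : p.Prime)
    {Q : Ideal (𝓞 F)} (hQ : Q.IsPrime) (hQtop : Q ≠ ⊤) (hpQ : (p : 𝓞 F) ∈ Q)
    {z : 𝓞 F} (hz : z ^ p = 1) : z - 1 ∈ Q := by
  haveI : Fact p.Prime := ⟨hp⟩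
  haveI := Ideal.Quotient.nontrivial_iff.mpr hQtop
  have hpR : (p : 𝓞 F ⧸ Q) = 0 := by
    have h := Ideal.Quotient.eq_zero_iff_mem.mpr hpQ
    rwa [map_natCast] at h
  have hdvd : ringChar (𝓞 F ⧸ Q) ∣ p := ringChar.dvd hpR
  have hchar : ringChar (𝓞 F ⧸ Q) = p := by
    rcases (Nat.Prime.eq_one_or_self_of_dvd hp _ hdvd) with h | h
    · exact absurd h (CharP.ringChar_ne_one)
    · exact h
  haveI : CharP (𝓞 F ⧸ Q) p := hchar ▸ ringChar.charP _
  have hz' : ((Ideal.Quotient.mk Q z) - 1) ^ p = 0 := by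
    rw [sub_pow_char]
    rw [← map_pow, hz]
    simp
  have h0 : (Ideal.Quotient.mk Q z) - 1 = 0 := by
    exact pow_eq_zero_iff hp.ne_zero |>.mp hz'
  have h1 : Ideal.Quotient.mk Q (z - 1) = 0 := by rw [map_sub, map_one]; exact h0
  exact Ideal.Quotient.eq_zero_iff_mem.mp h1

private theorem aux_not_unit {K : Type*} [Field K] [NumberField K] {p : ℕ} (hp : p.Prime) :
    ¬ IsUnit (p : 𝓞 K) := by
  rw [NumberField.isUnit_iff_norm]
  have h1 := RingOfIntegers.coe_norm (K := ℚ) (p : 𝓞 K)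
  have h2 : ((p : 𝓞 K) : K) = algebraMap ℚ K (p : ℚ) := by push_cast; simp
  rw [h1, h2, Algebra.norm_algebraMap]
  intro habs
  have hn : 0 < Module.finrank ℚ K := Module.finrank_pos
  have : (2 : ℚ) ≤ (p : ℚ) ^ Module.finrank ℚ K := by
    calc (2:ℚ) ≤ (p : ℚ) := by exact_mod_cast hp.two_le
    _ ≤ (p:ℚ) ^ Module.finrank ℚ K := le_self_pow₀ (by exact_mod_cast hp.one_lt.le) hn.ne'
  rw [abs_of_nonneg (by positivity)] at habs
  linarith

private theorem aux_no_order_p {Fplus F : Type*} [Field Fplus] [NumberField Fplus]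
    [Field F] [NumberField F] [Algebra Fplus F]
    {p : ℕ} (hp : p.Prime) (hodd : Odd p)
    (hunr : ∀ P : Ideal (𝓞 Fplus), P.IsPrime → (p : 𝓞 Fplus) ∈ P →
      Ideal.ramificationIdx' (Ideal.span {(p : ℤ)}) P = 1)
    (hsplit : ∀ P : Ideal (𝓞 Fplus), P.IsPrime → (p : 𝓞 Fplus) ∈ P →
      ∃ Q₁ Q₂ : Ideal (𝓞 F), Q₁ ≠ Q₂ ∧ Q₁.IsPrime ∧ Q₂.IsPrime ∧
        Ideal.map (algebraMap (𝓞 Fplus) (𝓞 F)) P = Q₁ * Q₂ ∧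
        Ideal.ramificationIdx' P Q₁ = 1 ∧
        Ideal.ramificationIdx' P Q₂ = 1 ∧
        Ideal.inertiaDeg' P Q₁ = 1 ∧
        Ideal.inertiaDeg' P Q₂ = 1) :
    ∀ z : 𝓞 F, z ^ p = 1 → z = 1 := by
  intro z hzp
  by_contra hz1
  haveI : Fact p.Prime := ⟨hp⟩
  haveI : NeZero p := ⟨hp.ne_zero⟩
  classical
  -- ζ is a primitive p-th root of unity in F
  set ζ : F := (algebraMap (𝓞 F) F) z with hζ
  have hζp : ζ ^ p = 1 := by rw [hζ, ← map_pow, hzp, map_one]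
  have hζ1 : ζ ≠ 1 := by
    intro h
    exact hz1 (RingOfIntegers.coe_injective (by rw [map_one, ← hζ]; exact h))
  have horder : orderOf ζ = p := orderOf_eq_prime hζp hζ1
  have hprim : IsPrimitiveRoot ζ p := horder ▸ IsPrimitiveRoot.orderOf ζ
  -- a prime P of 𝓞 Fplus above p
  have hspan : Ideal.span {(p : 𝓞 Fplus)} ≠ ⊤ := by
    rw [Ne, Ideal.span_singleton_eq_top]
    exact aux_not_unit hp
  obtain ⟨P, hPmax, hPle⟩ := Ideal.exists_le_maximal _ hspan
  have hPprime : P.IsPrime := hPmax.isPrime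
  have hpP : (p : 𝓞 Fplus) ∈ P := hPle (Ideal.mem_span_singleton_self _)
  obtain ⟨Q₁, Q₂, hQne, hQ₁p, hQ₂p, hmapPeq, he₁, he₂, -, -⟩ := hsplit P hPprime hpP
  -- p lies in Q₁ and Q₂
  have hpF : (p : 𝓞 F) ∈ Ideal.map (algebraMap (𝓞 Fplus) (𝓞 F)) P := by
    have h : algebraMap (𝓞 Fplus) (𝓞 F) (p : 𝓞 Fplus) = (p : 𝓞 F) := map_natCast _ p
    exact h ▸ Ideal.mem_map_of_mem _ hpP
  have hpQ₁ : (p : 𝓞 F) ∈ Q₁ := Ideal.mul_le_left (show (p : 𝓞 F) ∈ Q₁ * Q₂ by rw [← hmapPeq]; exact hpF)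
  have hpQ₂ : (p : 𝓞 F) ∈ Q₂ := Ideal.mul_le_right (show (p : 𝓞 F) ∈ Q₁ * Q₂ by rw [← hmapPeq]; exact hpF)
  have hp0F : (p : 𝓞 F) ≠ 0 := Nat.cast_ne_zero.mpr hp.ne_zero
  have hQ₁0 : Q₁ ≠ ⊥ := fun h => hp0F (by rw [h] at hpQ₁; exact hpQ₁)
  have hQ₂0 : Q₂ ≠ ⊥ := fun h => hp0F (by rw [h] at hpQ₂; exact hpQ₂)
  have hQ₁max := hQ₁p.isMaximal hQ₁0
  have hQ₂max := hQ₂p.isMaximal hQ₂0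
  have hQmul : Q₁ * Q₂ = Q₁ ⊓ Q₂ :=
    Ideal.mul_eq_inf_of_coprime (hQ₁max.coprime_of_ne hQ₂max hQne)
  -- all z^k - 1 lie in Q₁ ⊓ Q₂
  have hz1Q : z - 1 ∈ Q₁ ⊓ Q₂ :=
    ⟨aux_res hp hQ₁p hQ₁p.ne_top hpQ₁ hzp, aux_res hp hQ₂p hQ₂p.ne_top hpQ₂ hzp⟩
  have hzk : ∀ k : ℕ, z ^ k - 1 ∈ Q₁ ⊓ Q₂ := by
    intro k
    obtain ⟨d, hd⟩ := sub_dvd_pow_sub_pow z 1 k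
    rw [one_pow] at hd
    rw [hd]
    exact Ideal.mul_mem_right _ _ hz1Q
  -- choice of integral representatives of 1 - μ for primitive roots μ
  have hex : ∀ μ ∈ primitiveRoots p F,
      ∃ m : 𝓞 F, (algebraMap (𝓞 F) F) m = 1 - μ ∧ m ∈ Q₁ ⊓ Q₂ := by
    intro μ hμ
    have hμprim : IsPrimitiveRoot μ p := (mem_primitiveRoots hp.pos).mp hμ
    obtain ⟨i, hi, hiμ⟩ := hprim.eq_pow_of_pow_eq_one hμprim.pow_eq_one
    refine ⟨1 - z ^ i, ?_, ?_⟩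
    · rw [← hiμ, hζ]
      push_cast
      ring
    · have := hzk i
      have h' : -(z ^ i - 1) ∈ Q₁ ⊓ Q₂ := neg_mem this
      simpa using h'
  set f : F → 𝓞 F := fun μ =>
    if h : ∃ m : 𝓞 F, (algebraMap (𝓞 F) F) m = 1 - μ ∧ m ∈ Q₁ ⊓ Q₂ then h.choose else 0
    with hf
  have hfspec : ∀ μ ∈ primitiveRoots p F,
      (algebraMap (𝓞 F) F) (f μ) = 1 - μ ∧ f μ ∈ Q₁ ⊓ Q₂ := by
    intro μ hμ
    have h := hex μ hμ
    rw [hf]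
    simp only [dif_pos h]
    exact h.choose_spec
  -- the product identity p = ∏ (1 - μ)
  have hprodF : (p : F) = ∏ μ ∈ primitiveRoots p F, (1 - μ) := by
    have hc := cyclotomic_eq_prod_X_sub_primitiveRoots hprim
    have h1 := eval_one_cyclotomic_prime (R := F) (p := p)
    rw [hc, eval_prod] at h1
    rw [← h1]
    exact Finset.prod_congr rfl (fun μ _ => by simp)
  have hprodeq : (∏ μ ∈ primitiveRoots p F, f μ) = (p : 𝓞 F) := by
    apply RingOfIntegers.coe_injective
    rw [map_prod]
    have : ∀ μ ∈ primitiveRoots p F, (algebraMap (𝓞 F) F) (f μ) = 1 - μ :=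
      fun μ hμ => (hfspec μ hμ).1
    rw [Finset.prod_congr rfl this, ← hprodF]
    simp
  -- p ∈ Q₁ ^ 2
  have hcard2 : 1 < (primitiveRoots p F).card := by
    rw [hprim.card_primitiveRoots, Nat.totient_prime hp]
    have hp2 : p ≠ 2 := by rintro rfl; simp [Nat.odd_iff] at hodd
    have := hp.two_le
    omega
  obtain ⟨μ₁, hμ₁, μ₂, hμ₂, hμne⟩ := Finset.one_lt_card.mp hcard2
  have hpQ₁sq : (p : 𝓞 F) ∈ Q₁ ^ 2 := by
    rw [← hprodeq, ← Finset.mul_prod_erase _ f hμ₁,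
      ← Finset.mul_prod_erase _ f (Finset.mem_erase.mpr ⟨hμne.symm, hμ₂⟩), sq]
    have hm₁ : f μ₁ ∈ Q₁ := (hfspec μ₁ hμ₁).2.1
    have hm₂ : f μ₂ ∈ Q₁ := (hfspec μ₂ hμ₂).2.1
    exact Ideal.mul_mem_mul hm₁ (Ideal.mul_mem_right _ _ hm₂)
  -- ramification index of Q₁ over ℤ is 1
  have hmapP0 : Ideal.map (algebraMap (𝓞 Fplus) (𝓞 F)) P ≠ ⊥ := by
    intro h
    rw [h] at hpF
    exact hp0F hpF
  have hpZF : algebraMap ℤ (𝓞 F) ((p : ℤ)) = (p : 𝓞 F) := by push_cast; simp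
  have hmaptot0 : Ideal.map (algebraMap ℤ (𝓞 F)) (Ideal.span {(p : ℤ)}) ≠ ⊥ := by
    intro h
    have : (p : 𝓞 F) ∈ Ideal.map (algebraMap ℤ (𝓞 F)) (Ideal.span {(p : ℤ)}) :=
      hpZF ▸ Ideal.mem_map_of_mem _ (Ideal.mem_span_singleton_self _)
    rw [h] at this
    exact hp0F this
  have hleQ₁ : Ideal.map (algebraMap (𝓞 Fplus) (𝓞 F)) P ≤ Q₁ := by
    rw [hmapPeq]; exact Ideal.mul_le_left
  have htower := Ideal.ramificationIdx'_algebra_tower (R := ℤ) (S := 𝓞 Fplus) (T := 𝓞 F)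
    (p := Ideal.span {(p : ℤ)}) (P := P) (Q := Q₁) (hpm := hPprime) (hqm := hQ₁p) hmapP0 hmaptot0 hleQ₁
  rw [hunr P hPprime hpP, he₁, mul_one] at htower
  refine aux_not_le_sq htower ?_
  rw [Ideal.map_span]
  simp only [Set.image_singleton, hpZF]
  rw [Ideal.span_singleton_le_iff_mem]
  exact hpQ₁sq

/-- Let `p` be an odd prime, `F⁺` a totally real number field in which `p` is unramified, and
`F` a totally imaginary quadratic extension of `F⁺` in which every prime of `F⁺` above `p`
splits completely.  Then the index of the image of `𝓞_{F⁺}ˣ` in `𝓞_Fˣ` is finite and prime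
to `p`. -/
theorem unit_index_finite_and_prime_to_p
    (p : ℕ) (hp : p.Prime) (hodd : Odd p)
    (Fplus F : Type*) [Field Fplus] [NumberField Fplus] [Field F] [NumberField F]
    [Algebra Fplus F]
    -- `F⁺` is totally real
    (htr : ∀ v : InfinitePlace Fplus, v.IsReal)
    -- `F` is a quadratic extension of `F⁺`
    (hquad : Module.finrank Fplus F = 2)
    -- `F` is totally imaginary
    (hti : ∀ v : InfinitePlace F, v.IsComplex)
    -- `p` is unramified in `F⁺`: every prime of `𝓞_{F⁺}` above `p` has ramification index 1
    -- over `pℤ`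
    (hunr : ∀ P : Ideal (𝓞 Fplus), P.IsPrime → (p : 𝓞 Fplus) ∈ P →
      Ideal.ramificationIdx' (Ideal.span {(p : ℤ)}) P = 1)
    -- every prime of `F⁺` above `p` splits completely in `F`
    (hsplit : ∀ P : Ideal (𝓞 Fplus), P.IsPrime → (p : 𝓞 Fplus) ∈ P →
      ∃ Q₁ Q₂ : Ideal (𝓞 F), Q₁ ≠ Q₂ ∧ Q₁.IsPrime ∧ Q₂.IsPrime ∧
        Ideal.map (algebraMap (𝓞 Fplus) (𝓞 F)) P = Q₁ * Q₂ ∧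
        Ideal.ramificationIdx' P Q₁ = 1 ∧
        Ideal.ramificationIdx' P Q₂ = 1 ∧
        Ideal.inertiaDeg' P Q₁ = 1 ∧
        Ideal.inertiaDeg' P Q₂ = 1) :
    (Units.map (algebraMap (𝓞 Fplus) (𝓞 F)).toMonoidHom).range.index ≠ 0 ∧
      ¬ p ∣ (Units.map (algebraMap (𝓞 Fplus) (𝓞 F)).toMonoidHom).range.index := by
  classical
  haveI hfd : FiniteDimensional Fplus F := FiniteDimensional.of_finrank_pos (by omega)
  haveI : Normal Fplus F := aux_normal hquad
  haveI : IsGalois Fplus F := ⟨⟩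
  have hcard : Fintype.card (F ≃ₐ[Fplus] F) = 2 := by
    rw [← Nat.card_eq_fintype_card, IsGalois.card_aut_eq_finrank]; exact hquad
  obtain ⟨c, hc⟩ : ∃ c : F ≃ₐ[Fplus] F, c ≠ 1 := by
    have h1 : 1 < Fintype.card (F ≃ₐ[Fplus] F) := by omega
    haveI : Nontrivial (F ≃ₐ[Fplus] F) := Fintype.one_lt_card_iff_nontrivial.mp h1
    exact exists_ne 1
  have hc2 : c * c = 1 := by
    have hdvd : orderOf c ∣ 2 := hcard ▸ orderOf_dvd_card
    rw [← sq]
    exact orderOf_dvd_iff_pow_eq_one.mp hdvd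
  -- the induced maps on rings of integers and units
  set σ : (𝓞 F) ≃+* (𝓞 F) := RingOfIntegers.mapRingEquiv c with hσ
  set τ : (𝓞 F)ˣ ≃* (𝓞 F)ˣ := Units.mapEquiv σ.toMulEquiv with hτ
  set H := (Units.map (algebraMap (𝓞 Fplus) (𝓞 F)).toMonoidHom).range with hH
  have hσcoe : ∀ x : 𝓞 F, algebraMap (𝓞 F) F (σ x) = c (algebraMap (𝓞 F) F x) := fun x => rfl
  have hτcoe : ∀ u : (𝓞 F)ˣ, ((τ u : (𝓞 F)ˣ) : 𝓞 F) = σ (u : 𝓞 F) := fun u => rfl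
  have hσσ : ∀ x : 𝓞 F, σ (σ x) = x := by
    intro x
    apply RingOfIntegers.coe_injective
    rw [hσcoe, hσcoe]
    have := AlgEquiv.ext_iff.mp hc2 (algebraMap (𝓞 F) F x)
    simpa using this
  -- fixed units are in H
  have hfix_mem : ∀ u : (𝓞 F)ˣ, τ u = u → u ∈ H := by
    intro u hu
    have huO : σ (u : 𝓞 F) = (u : 𝓞 F) := by rw [← hτcoe, hu]
    have huO' : σ ((u⁻¹ : (𝓞 F)ˣ) : 𝓞 F) = ((u⁻¹ : (𝓞 F)ˣ) : 𝓞 F) := by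
      have h : τ u⁻¹ = u⁻¹ := by rw [map_inv, hu]
      rw [← hτcoe, h]
    obtain ⟨y, hy⟩ := aux_fixed hcard c hc (x := algebraMap (𝓞 F) F (u : 𝓞 F))
      (by rw [← hσcoe, huO])
    obtain ⟨y', hy'⟩ := aux_fixed hcard c hc (x := algebraMap (𝓞 F) F ((u⁻¹ : (𝓞 F)ˣ) : 𝓞 F))
      (by rw [← hσcoe, huO'])
    have hyint : IsIntegral ℤ y := by
      rw [← isIntegral_algebraMap_iff (B := F) (algebraMap Fplus F).injective, hy]
      exact (u : 𝓞 F).2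
    have hy'int : IsIntegral ℤ y' := by
      rw [← isIntegral_algebraMap_iff (B := F) (algebraMap Fplus F).injective, hy']
      exact ((u⁻¹ : (𝓞 F)ˣ) : 𝓞 F).2
    have hyy' : y * y' = 1 := by
      apply (algebraMap Fplus F).injective
      rw [map_mul, hy, hy', map_one, ← map_mul, Units.mul_inv, map_one]
    have hmul : (⟨y, hyint⟩ : 𝓞 Fplus) * ⟨y', hy'int⟩ = 1 := by
      apply RingOfIntegers.coe_injective
      show y * y' = 1
      exact hyy'
    have hmul' : (⟨y', hy'int⟩ : 𝓞 Fplus) * ⟨y, hyint⟩ = 1 := by rw [mul_comm]; exact hmul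
    refine ⟨⟨⟨y, hyint⟩, ⟨y', hy'int⟩, hmul, hmul'⟩, ?_⟩
    apply Units.ext
    apply RingOfIntegers.coe_injective
    exact hy
  -- elements of H are fixed
  have hH_fix : ∀ u : (𝓞 F)ˣ, u ∈ H → τ u = u := by
    rintro u ⟨w, rfl⟩
    apply Units.ext
    apply RingOfIntegers.coe_injective
    show c (algebraMap Fplus F (algebraMap (𝓞 Fplus) Fplus (w : 𝓞 Fplus)))
      = algebraMap Fplus F (algebraMap (𝓞 Fplus) Fplus (w : 𝓞 Fplus))
    exact c.commutes _
  have hττ : ∀ u : (𝓞 F)ˣ, τ (τ u) = u := by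
    intro u
    apply Units.ext
    rw [hτcoe, hτcoe, hσσ]
  have hnorm_mem : ∀ u : (𝓞 F)ˣ, u * τ u ∈ H := by
    intro u
    apply hfix_mem
    rw [map_mul, hττ, mul_comm]
  -- every unit has a power lying in H
  have hpow_mem : ∀ u : (𝓞 F)ˣ, ∃ n : ℕ, 0 < n ∧ u ^ n ∈ H := by
    intro u
    have htor : u * (τ u)⁻¹ ∈ NumberField.Units.torsion F := by
      rw [NumberField.Units.mem_torsion]
      intro w
      have hval : ((u * (τ u)⁻¹ : (𝓞 F)ˣ) : 𝓞 F) * ((τ u : (𝓞 F)ˣ) : 𝓞 F) = (u : 𝓞 F) := by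
        rw [← Units.val_mul, inv_mul_cancel_right]
      have hw := congrArg (fun t : 𝓞 F => w (algebraMap (𝓞 F) F t)) hval
      simp only [map_mul] at hw
      have hplace : w (algebraMap (𝓞 F) F ((τ u : (𝓞 F)ˣ) : 𝓞 F))
          = w (algebraMap (𝓞 F) F (u : 𝓞 F)) := by
        rw [hτcoe, hσcoe]
        exact aux_place htr hquad hti c hc w _
      rw [hplace] at hw
      have hne : w (algebraMap (𝓞 F) F (u : 𝓞 F)) ≠ 0 := by
        intro h0
        have hx0 : algebraMap (𝓞 F) F (u : 𝓞 F) = 0 := by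
          rwa [_root_.map_eq_zero] at h0
        have : (u : 𝓞 F) = 0 := RingOfIntegers.coe_injective (by rw [hx0, map_zero])
        exact Units.ne_zero u this
      exact mul_right_cancel₀ hne (hw.trans (one_mul _).symm)
    obtain ⟨n, hn, hpow⟩ := isOfFinOrder_iff_pow_eq_one.mp htor
    refine ⟨2 * n, by omega, ?_⟩
    have hsq : u ^ 2 = (u * τ u) * (u * (τ u)⁻¹) := by
      rw [sq, mul_mul_mul_comm, mul_inv_cancel, mul_one]
    have hpw : u ^ (2 * n) = (u * τ u) ^ n := by
      rw [pow_mul, hsq, mul_pow, hpow, mul_one]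
    rw [hpw]
    exact pow_mem (hnorm_mem u) n
  -- the quotient is finite
  haveI : Group.FG (𝓞 F)ˣ := Group.fg_iff_monoid_fg.mpr inferInstance
  have htorsion : Monoid.IsTorsion ((𝓞 F)ˣ ⧸ H) := by
    intro q
    induction q using QuotientGroup.induction_on with
    | H u =>
      obtain ⟨n, hn, hmem⟩ := hpow_mem u
      refine isOfFinOrder_iff_pow_eq_one.mpr ⟨n, hn, ?_⟩
      rw [← QuotientGroup.mk_pow]
      exact (QuotientGroup.eq_one_iff _).mpr hmem
  haveI hfin : Finite ((𝓞 F)ˣ ⧸ H) := CommGroup.finite_of_fg_torsion _ (fun g => htorsion g)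
  have hindex : H.index = Nat.card ((𝓞 F)ˣ ⧸ H) := rfl
  constructor
  · rw [hindex]
    exact Nat.card_ne_zero.mpr ⟨⟨1⟩, hfin⟩
  · intro hdvd
    haveI : Fact p.Prime := ⟨hp⟩
    obtain ⟨q, hq⟩ := exists_prime_orderOf_dvd_card' (G := (𝓞 F)ˣ ⧸ H) p
      (by rwa [← hindex])
    obtain ⟨u, rfl⟩ := QuotientGroup.mk_surjective q
    have hupH : u ^ p ∈ H := by
      rw [← QuotientGroup.eq_one_iff, QuotientGroup.mk_pow, ← hq]
      exact pow_orderOf_eq_one _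
    have hunotH : u ∉ H := by
      intro h
      have h1 : (QuotientGroup.mk u : (𝓞 F)ˣ ⧸ H) = 1 := (QuotientGroup.eq_one_iff u).mpr h
      rw [h1, orderOf_one] at hq
      exact hp.one_lt.ne' hq.symm
    set ε : (𝓞 F)ˣ := u * (τ u)⁻¹ with hε
    have hεp : ε ^ p = 1 := by
      rw [hε, mul_pow, inv_pow, ← map_pow, hH_fix _ hupH, mul_inv_cancel]
    have hεval : (ε : 𝓞 F) ^ p = 1 := by
      rw [← Units.val_pow_eq_pow_val, hεp, Units.val_one]
    have hε1 : ε = 1 := by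
      rw [← Units.val_eq_one]
      exact aux_no_order_p hp hodd hunr hsplit _ hεval
    have hfix : τ u = u := by
      have := mul_inv_eq_one.mp hε1
      exact this.symm
    exact hunotH (hfix_mem u hfix)
end

section
/- Let K be a field of characteristic different from 2, G a group, ρ : G → GL₂(K) a group homomorphism into the group of invertible 2×2 matrices over K, ν : G → K^× a group homomorphism, and M ∈ GL₂(K). Assume that ρ(g) = ν(g) · (M ρ(g) M^{-1}) holds for every g ∈ G (where ν(g)·A denotes the scalar multiple of the matrix A), and that there exists g₀ ∈ G with ν(g₀) = −1. Then the image under ρ of the kernel of ν is a commutative subgroup of GL₂(K): ρ(h₁)ρ(h₂) = ρ(h₂)ρ(h₁) for all h₁, h₂ in ker ν. -/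
open scoped MatrixGroups

lemma decomp_aux {K : Type*} [Field K] (M A : Matrix (Fin 2) (Fin 2) K)
    (hM : ¬(M 0 1 = 0 ∧ M 1 0 = 0 ∧ M 0 0 = M 1 1))
    (hA : A * M = M * A) :
    ∃ α β : K, A = α • (1 : Matrix (Fin 2) (Fin 2) K) + β • M := by
  have e1 := congrFun (congrFun hA 0) 0
  have e2 := congrFun (congrFun hA 0) 1
  have e3 := congrFun (congrFun hA 1) 0
  simp [Matrix.mul_apply, Fin.sum_univ_two] at e1 e2 e3
  by_cases h01 : M 0 1 = 0
  · by_cases h10 : M 1 0 = 0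
    · have hd : M 0 0 - M 1 1 ≠ 0 := fun h => hM ⟨h01, h10, sub_eq_zero.mp h⟩
      have hA01 : A 0 1 = 0 := by
        rw [h01] at e2
        rcases mul_eq_zero.mp (by linear_combination e2 : A 0 1 * (M 1 1 - M 0 0) = 0) with h | h
        · exact h
        · exact absurd (by linear_combination -h) hd
      have hA10 : A 1 0 = 0 := by
        rw [h10] at e3
        rcases mul_eq_zero.mp (by linear_combination e3 : A 1 0 * (M 0 0 - M 1 1) = 0) with h | h
        · exact h
        · exact absurd h hd
      refine ⟨A 0 0 - (A 0 0 - A 1 1) / (M 0 0 - M 1 1) * M 0 0,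
        (A 0 0 - A 1 1) / (M 0 0 - M 1 1), ?_⟩
      ext i j
      fin_cases i <;> fin_cases j <;>
        simp [Matrix.one_apply, hA01, hA10, h01, h10] <;> field_simp <;> ring
    · refine ⟨A 0 0 - A 1 0 / M 1 0 * M 0 0, A 1 0 / M 1 0, ?_⟩
      have hA01 : A 0 1 = 0 := by
        rw [h01] at e1
        rcases mul_eq_zero.mp (by linear_combination e1 : A 0 1 * M 1 0 = 0) with h | h
        · exact h
        · exact absurd h h10
      ext i j
      fin_cases i <;> fin_cases j <;>
        simp [Matrix.one_apply, hA01, h01] <;> field_simp <;> linear_combination e3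
  · refine ⟨A 0 0 - A 0 1 / M 0 1 * M 0 0, A 0 1 / M 0 1, ?_⟩
    ext i j
    fin_cases i <;> fin_cases j <;> simp [Matrix.one_apply] <;> field_simp
    · linear_combination -e1
    · linear_combination -e2

/-- Let `K` be a field of characteristic `≠ 2`, `G` a group, `ρ : G → GL₂(K)` and
`ν : G → Kˣ` group homomorphisms, and `M ∈ GL₂(K)`.  If `ρ(g) = ν(g)·(M ρ(g) M⁻¹)` for all
`g ∈ G` and `ν(g₀) = -1` for some `g₀`, then the image under `ρ` of the kernel of `ν` is
commutative. -/
theorem image_of_ker_commutes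
    (K : Type*) [Field K] (h2 : (2 : K) ≠ 0)
    (G : Type*) [Group G]
    (ρ : G →* GL (Fin 2) K) (ν : G →* Kˣ)
    (M : GL (Fin 2) K)
    (hconj : ∀ g : G, ((ρ g : GL (Fin 2) K) : Matrix (Fin 2) (Fin 2) K)
      = (ν g : K) • ((M * ρ g * M⁻¹ : GL (Fin 2) K) : Matrix (Fin 2) (Fin 2) K))
    (g₀ : G) (hg₀ : ν g₀ = -1) :
    ∀ h₁ h₂ : G, h₁ ∈ ν.ker → h₂ ∈ ν.ker → ρ h₁ * ρ h₂ = ρ h₂ * ρ h₁ := by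
  set Mv : Matrix (Fin 2) (Fin 2) K := (M : Matrix (Fin 2) (Fin 2) K) with hMv
  -- commutation for kernel elements
  have hcomm : ∀ h : G, h ∈ ν.ker → ((ρ h : GL (Fin 2) K) : Matrix (Fin 2) (Fin 2) K) * Mv
      = Mv * ((ρ h : GL (Fin 2) K) : Matrix (Fin 2) (Fin 2) K) := by
    intro h hk
    have hc := hconj h
    rw [MonoidHom.mem_ker.mp hk] at hc
    simp only [Units.val_one, one_smul, Units.val_mul] at hc
    calc (ρ h : Matrix (Fin 2) (Fin 2) K) * Mv
        = (Mv * (ρ h : Matrix (Fin 2) (Fin 2) K) * ((M⁻¹ : GL (Fin 2) K) : Matrix (Fin 2) (Fin 2) K)) * Mv := by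
          rw [← hc]
      _ = Mv * (ρ h : Matrix (Fin 2) (Fin 2) K) * (((M⁻¹ : GL (Fin 2) K) : Matrix (Fin 2) (Fin 2) K) * Mv) := by
          rw [mul_assoc]
      _ = Mv * (ρ h : Matrix (Fin 2) (Fin 2) K) := by
          rw [show ((M⁻¹ : GL (Fin 2) K) : Matrix (Fin 2) (Fin 2) K) * Mv = 1 from M.inv_mul, mul_one]
  -- anticommutation for g₀
  have hanti : ((ρ g₀ : GL (Fin 2) K) : Matrix (Fin 2) (Fin 2) K) * Mv
      = -(Mv * ((ρ g₀ : GL (Fin 2) K) : Matrix (Fin 2) (Fin 2) K)) := by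
    have hc := hconj g₀
    rw [hg₀] at hc
    simp only [Units.val_neg, Units.val_one, neg_smul, one_smul, Units.val_mul] at hc
    calc ((ρ g₀ : GL (Fin 2) K) : Matrix (Fin 2) (Fin 2) K) * Mv
        = (-(Mv * (ρ g₀ : Matrix (Fin 2) (Fin 2) K) * ((M⁻¹ : GL (Fin 2) K) : Matrix (Fin 2) (Fin 2) K))) * Mv := by
          rw [← hc]
      _ = -(Mv * (ρ g₀ : Matrix (Fin 2) (Fin 2) K) * (((M⁻¹ : GL (Fin 2) K) : Matrix (Fin 2) (Fin 2) K) * Mv)) := by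
          rw [neg_mul, mul_assoc]
      _ = -(Mv * (ρ g₀ : Matrix (Fin 2) (Fin 2) K)) := by
          rw [show ((M⁻¹ : GL (Fin 2) K) : Matrix (Fin 2) (Fin 2) K) * Mv = 1 from M.inv_mul, mul_one]
  -- M is not scalar
  have hM : ¬(Mv 0 1 = 0 ∧ Mv 1 0 = 0 ∧ Mv 0 0 = Mv 1 1) := by
    rintro ⟨ha, hb, hd⟩
    set c : K := Mv 0 0 with hcdef
    have hscal : Mv = c • (1 : Matrix (Fin 2) (Fin 2) K) := by
      ext i j
      fin_cases i <;> fin_cases j <;> simp [Matrix.one_apply, ha, hb, ← hd] <;> rfl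
    set T : Matrix (Fin 2) (Fin 2) K := ((ρ g₀ : GL (Fin 2) K) : Matrix (Fin 2) (Fin 2) K) with hT
    have h1 : (c + c) • T = 0 := by
      have := hanti
      rw [hscal] at this
      have h' : c • T = -(c • T) := by
        calc c • T = T * (c • (1 : Matrix (Fin 2) (Fin 2) K)) := by
              rw [mul_smul_comm, mul_one]
          _ = -((c • (1 : Matrix (Fin 2) (Fin 2) K)) * T) := this
          _ = -(c • T) := by rw [smul_mul_assoc, one_mul]
      rw [add_smul]; nth_rewrite 2 [h']; exact add_neg_cancel _
    have h2' : (c + c) • (1 : Matrix (Fin 2) (Fin 2) K) = 0 := by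
      calc (c + c) • (1 : Matrix (Fin 2) (Fin 2) K)
          = (c + c) • (T * ((ρ g₀)⁻¹ : GL (Fin 2) K)) := by rw [(ρ g₀).mul_inv]
        _ = ((c + c) • T) * ((ρ g₀)⁻¹ : GL (Fin 2) K) := by rw [smul_mul_assoc]
        _ = 0 := by rw [h1, zero_mul]
    have hcc : c + c = 0 := by
      have := congrFun (congrFun h2' 0) 0
      simpa using this
    have hc0 : c = 0 := by
      have : (2 : K) * c = 0 := by linear_combination hcc
      rcases mul_eq_zero.mp this with h | h
      · exact absurd h h2
      · exact h
    have : Mv * ((M⁻¹ : GL (Fin 2) K) : Matrix (Fin 2) (Fin 2) K) = 1 := M.mul_inv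
    rw [hscal, hc0, zero_smul, zero_mul] at this
    have := congrFun (congrFun this 0) 0
    simp [Matrix.one_apply] at this
  -- conclude
  intro h₁ h₂ k₁ k₂
  obtain ⟨α, β, hdec⟩ := decomp_aux Mv ((ρ h₁ : GL (Fin 2) K) : Matrix (Fin 2) (Fin 2) K) hM (hcomm h₁ k₁)
  ext : 1
  show ((ρ h₁ : GL (Fin 2) K) : Matrix (Fin 2) (Fin 2) K) * ((ρ h₂ : GL (Fin 2) K) : Matrix (Fin 2) (Fin 2) K)
    = ((ρ h₂ : GL (Fin 2) K) : Matrix (Fin 2) (Fin 2) K) * ((ρ h₁ : GL (Fin 2) K) : Matrix (Fin 2) (Fin 2) K)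
  rw [hdec, add_mul, mul_add, smul_mul_assoc, one_mul, smul_mul_assoc, mul_smul_comm, mul_one,
    mul_smul_comm, hcomm h₂ k₂]
end
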